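/- With n = 4 and k = 6 (the 11-dimensional lens space L₄¹¹ = S¹¹/ℤ₄, on which the Spin-ℤ₈ structure doubles the charges of the gravitino and dilatino to 2 and −6): (ηRS(4,6,2) − ηRS(4,6,0)) − 2·(ηD(4,6,2) − ηD(4,6,0)) − (ηD(4,6,−6) − ηD(4,6,0)) = 1/2. (This is the value 1/2 ∈ ℝ/ℤ of the type IIB duality anomaly on L₄¹¹.) -/
import Mathlib


open scoped BigOperators

/-- The Atiyah–Patodi–Singer eta invariant of the charge-`q` Dirac operator on the
lens space `L_n^{2k-1} = S^{2k-1}/ℤ_n`. -/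
noncomputable def etaD (n k : ℕ) (q : ℤ) : ℂ :=
  -(1 / ((n : ℂ) * Complex.I ^ k)) *
    ∑ j ∈ Finset.Icc 1 (n - 1),
      Complex.exp (-(2 * (Real.pi : ℂ) * Complex.I * (q : ℂ) * (j : ℂ)) / (n : ℂ)) /
        (2 * ((Real.sin (Real.pi * (j : ℝ) / (n : ℝ)) : ℝ) : ℂ)) ^ k

/-- The Atiyah–Patodi–Singer eta invariant of the charge-`q` Rarita–Schwinger operator on the
lens space `L_n^{2k-1} = S^{2k-1}/ℤ_n`. -/
noncomputable def etaRS (n k : ℕ) (q : ℤ) : ℂ :=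
  -(1 / ((n : ℂ) * Complex.I ^ k)) *
    ∑ j ∈ Finset.Icc 1 (n - 1),
      Complex.exp (-(2 * (Real.pi : ℂ) * Complex.I * (q : ℂ) * (j : ℂ)) / (n : ℂ)) *
        (2 * (k : ℂ) * ((Real.cos (2 * Real.pi * (j : ℝ) / (n : ℝ)) : ℝ) : ℂ) - 1) /
        (2 * ((Real.sin (Real.pi * (j : ℝ) / (n : ℝ)) : ℝ) : ℂ)) ^ k

lemma aux_h1 : Real.sin (Real.pi * 1 / 4) = Real.sqrt 2 / 2 := by
  rw [show Real.pi * 1 / 4 = Real.pi/4 by ring, Real.sin_pi_div_four]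
lemma aux_h2 : Real.sin (Real.pi * 2 / 4) = 1 := by
  rw [show Real.pi * 2 / 4 = Real.pi/2 by ring, Real.sin_pi_div_two]
lemma aux_h3 : Real.sin (Real.pi * 3 / 4) = Real.sqrt 2 / 2 := by
  rw [show Real.pi * 3 / 4 = Real.pi - Real.pi/4 by ring, Real.sin_pi_sub, Real.sin_pi_div_four]
lemma aux_c1 : Real.cos (2 * Real.pi * 1 / 4) = 0 := by
  rw [show 2 * Real.pi * 1 / 4 = Real.pi/2 by ring, Real.cos_pi_div_two]
lemma aux_c2 : Real.cos (2 * Real.pi * 2 / 4) = -1 := by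
  rw [show 2 * Real.pi * 2 / 4 = Real.pi by ring, Real.cos_pi]
lemma aux_c3 : Real.cos (2 * Real.pi * 3 / 4) = 0 := by
  rw [show 2 * Real.pi * 3 / 4 = Real.pi + Real.pi/2 by ring, Real.cos_add]
  simp
lemma aux_hs6 : ((Real.sqrt 2 : ℝ) : ℂ) ^ 6 = 8 := by
  norm_cast
  rw [show Real.sqrt 2 ^ 6 = (Real.sqrt 2 ^ 2)^3 by ring, Real.sq_sqrt (by norm_num)]
  norm_num
lemma aux_hI6 : Complex.I ^ 6 = -1 := by
  rw [show Complex.I ^ 6 = (Complex.I^2)^3 by ring, Complex.I_sq]; norm_num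
lemma aux_expI (m : ℤ) : Complex.exp (m * (Real.pi * Complex.I)) = (-1)^m := by
  rw [Complex.exp_int_mul, Complex.exp_pi_mul_I]

lemma etaD_zero : etaD 4 6 0 = 17/256 := by
  rw [etaD, show Finset.Icc 1 (4-1) = ({1,2,3} : Finset ℕ) by decide]
  rw [Finset.sum_insert (by decide), Finset.sum_insert (by decide), Finset.sum_singleton]
  simp only [Nat.cast_one, Nat.cast_ofNat, Int.cast_zero]
  rw [aux_h1, aux_h2, aux_h3, aux_hI6]
  push_cast
  rw [show (2 * (((Real.sqrt 2:ℝ):ℂ) / 2)) ^ 6 = ((Real.sqrt 2:ℝ):ℂ)^6 by ring, aux_hs6]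
  norm_num [Complex.exp_zero]

lemma etaD_two : etaD 4 6 2 = -15/256 := by
  rw [etaD, show Finset.Icc 1 (4-1) = ({1,2,3} : Finset ℕ) by decide]
  rw [Finset.sum_insert (by decide), Finset.sum_insert (by decide), Finset.sum_singleton]
  simp only [Nat.cast_one, Nat.cast_ofNat, Int.cast_ofNat]
  rw [aux_h1, aux_h2, aux_h3, aux_hI6]
  rw [show -(2*(Real.pi:ℂ)*Complex.I*2*1)/4 = ((-1:ℤ):ℂ)*(Real.pi*Complex.I) by push_cast; ring,
      show -(2*(Real.pi:ℂ)*Complex.I*2*2)/4 = ((-2:ℤ):ℂ)*(Real.pi*Complex.I) by push_cast; ring,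
      show -(2*(Real.pi:ℂ)*Complex.I*2*3)/4 = ((-3:ℤ):ℂ)*(Real.pi*Complex.I) by push_cast; ring,
      aux_expI, aux_expI, aux_expI]
  push_cast
  rw [show (2 * (((Real.sqrt 2:ℝ):ℂ) / 2)) ^ 6 = ((Real.sqrt 2:ℝ):ℂ)^6 by ring, aux_hs6]
  norm_num

lemma etaD_neg_six : etaD 4 6 (-6) = -15/256 := by
  rw [etaD, show Finset.Icc 1 (4-1) = ({1,2,3} : Finset ℕ) by decide]
  rw [Finset.sum_insert (by decide), Finset.sum_insert (by decide), Finset.sum_singleton]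
  simp only [Nat.cast_one, Nat.cast_ofNat, Int.cast_neg, Int.cast_ofNat]
  rw [aux_h1, aux_h2, aux_h3, aux_hI6]
  rw [show -(2*(Real.pi:ℂ)*Complex.I*(-6)*1)/4 = ((3:ℤ):ℂ)*(Real.pi*Complex.I) by push_cast; ring,
      show -(2*(Real.pi:ℂ)*Complex.I*(-6)*2)/4 = ((6:ℤ):ℂ)*(Real.pi*Complex.I) by push_cast; ring,
      show -(2*(Real.pi:ℂ)*Complex.I*(-6)*3)/4 = ((9:ℤ):ℂ)*(Real.pi*Complex.I) by push_cast; ring,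
      aux_expI, aux_expI, aux_expI]
  push_cast
  rw [show (2 * (((Real.sqrt 2:ℝ):ℂ) / 2)) ^ 6 = ((Real.sqrt 2:ℝ):ℂ)^6 by ring, aux_hs6]
  norm_num

lemma etaRS_zero : etaRS 4 6 0 = -29/256 := by
  rw [etaRS, show Finset.Icc 1 (4-1) = ({1,2,3} : Finset ℕ) by decide]
  rw [Finset.sum_insert (by decide), Finset.sum_insert (by decide), Finset.sum_singleton]
  simp only [Nat.cast_one, Nat.cast_ofNat, Int.cast_zero]
  rw [aux_h1, aux_h2, aux_h3, aux_c1, aux_c2, aux_c3, aux_hI6]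
  push_cast
  rw [show (2 * (((Real.sqrt 2:ℝ):ℂ) / 2)) ^ 6 = ((Real.sqrt 2:ℝ):ℂ)^6 by ring, aux_hs6]
  norm_num [Complex.exp_zero]

lemma etaRS_two : etaRS 4 6 2 = 3/256 := by
  rw [etaRS, show Finset.Icc 1 (4-1) = ({1,2,3} : Finset ℕ) by decide]
  rw [Finset.sum_insert (by decide), Finset.sum_insert (by decide), Finset.sum_singleton]
  simp only [Nat.cast_one, Nat.cast_ofNat, Int.cast_ofNat]
  rw [aux_h1, aux_h2, aux_h3, aux_c1, aux_c2, aux_c3, aux_hI6]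
  rw [show -(2*(Real.pi:ℂ)*Complex.I*2*1)/4 = ((-1:ℤ):ℂ)*(Real.pi*Complex.I) by push_cast; ring,
      show -(2*(Real.pi:ℂ)*Complex.I*2*2)/4 = ((-2:ℤ):ℂ)*(Real.pi*Complex.I) by push_cast; ring,
      show -(2*(Real.pi:ℂ)*Complex.I*2*3)/4 = ((-3:ℤ):ℂ)*(Real.pi*Complex.I) by push_cast; ring,
      aux_expI, aux_expI, aux_expI]
  push_cast
  rw [show (2 * (((Real.sqrt 2:ℝ):ℂ) / 2)) ^ 6 = ((Real.sqrt 2:ℝ):ℂ)^6 by ring, aux_hs6]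
  norm_num

/-- The type IIB duality anomaly on the 11-dimensional lens space `L₄¹¹ = S¹¹/ℤ₄`
(with gravitino and dilatino charges doubled to `2` and `-6` by the Spin-ℤ₈ structure)
equals `1/2`. -/
theorem anomaly_L4_11 :
    (etaRS 4 6 2 - etaRS 4 6 0) - 2 * (etaD 4 6 2 - etaD 4 6 0)
      - (etaD 4 6 (-6) - etaD 4 6 0) = 1 / 2 := by
  rw [etaRS_two, etaRS_zero, etaD_two, etaD_neg_six, etaD_zero]
  norm_num
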